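/- Let G be an index coding instance on n ≥ 1 messages and t ≥ 1 an integer. Then a (t, r) index code for G exists if and only if 2^r ≥ χ(Γ_t(G)); equivalently, the minimum integer r ≥ 0 for which a (t, r) index code for G exists equals ⌈log₂ χ(Γ_t(G))⌉. -/

import Mathlib

namespace IC

/-- Two message tuples (with `x_i ∈ {0,…,q−1}^{t_i}`) are confusable at
position `l` of node `j` for the directed graph with edge relation `E`. -/
def ConfusableAt {n q : ℕ} (E : Fin n → Fin n → Prop) (t : Fin n → ℕ)
    (j : Fin n) (l : Fin (t j))
    (x z : ∀ i : Fin n, Fin (t i) → Fin q) : Prop :=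
  x j l ≠ z j l ∧ ∀ i : Fin n, E i j → x i = z i

/-- The component confusion graph `Γ_t^{(jl)}(G)`. -/
def componentConfusionGraph {n : ℕ} (q : ℕ) (E : Fin n → Fin n → Prop) (t : Fin n → ℕ)
    (j : Fin n) (l : Fin (t j)) :
    SimpleGraph (∀ i : Fin n, Fin (t i) → Fin q) where
  Adj x z := ConfusableAt E t j l x z
  symm := ⟨fun _ _ ⟨h1, h2⟩ => ⟨h1.symm, fun i hi => (h2 i hi).symm⟩⟩
  loopless := ⟨fun _ ⟨h1, _⟩ => h1 rfl⟩

/-- The confusion graph `Γ_t(G)`. -/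
def confusionGraph {n : ℕ} (q : ℕ) (E : Fin n → Fin n → Prop) (t : Fin n → ℕ) :
    SimpleGraph (∀ i : Fin n, Fin (t i) → Fin q) where
  Adj x z := ∃ (j : Fin n) (l : Fin (t j)), ConfusableAt E t j l x z
  symm := ⟨fun _ _ ⟨j, l, h1, h2⟩ => ⟨j, l, h1.symm, fun i hi => (h2 i hi).symm⟩⟩
  loopless := ⟨fun _ ⟨_, _, h1, _⟩ => h1 rfl⟩

end IC
namespace IC

/-- A `(t, r)` index code (with per-message lengths `t j` bits and index length
`r` bits) exists for the directed graph with edge relation `E` on vertex set `V`: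
there are an encoder `φ` and, for each node `j`, a decoder `ψ j` that recovers
message `x j` from the index `φ x` and the side information `(x i)_{i ∈ A_j}`. -/
def HasCode {V : Type*} (E : V → V → Prop) (t : V → ℕ) (r : ℕ) : Prop :=
  ∃ (φ : (∀ j : V, Fin (t j) → Fin 2) → (Fin r → Fin 2))
    (ψ : ∀ j : V, (Fin r → Fin 2) → (∀ i : {i : V // E i j}, Fin (t i.1) → Fin 2) →
      (Fin (t j) → Fin 2)),
    ∀ (x : ∀ j : V, Fin (t j) → Fin 2) (j : V),
      ψ j (φ x) (fun i => x i.1) = x j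

/-- The broadcast rate `β = inf { r/t : a (t, r) index code exists }`. -/
noncomputable def broadcastRate {V : Type*} (E : V → V → Prop) : ℝ :=
  sInf {ρ : ℝ | ∃ (t r : ℕ), 1 ≤ t ∧ HasCode E (fun _ => t) r ∧ ρ = (r : ℝ) / t}

end IC

section Aux

open IC in
theorem IC.hasCode_iff_colorable {n : ℕ}
    (E : Fin n → Fin n → Prop) (t : Fin n → ℕ) (r : ℕ) :
    HasCode E t r ↔ (confusionGraph 2 E t).Colorable (2 ^ r) := by
  classical
  constructor
  · rintro ⟨φ, ψ, hψ⟩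
    have C : (confusionGraph 2 E t).Coloring (Fin r → Fin 2) := by
      refine SimpleGraph.Coloring.mk φ ?_
      rintro x z ⟨j, l, hne, hside⟩ hφ
      have hsi : (fun i : {i : Fin n // E i j} => x i.1) =
          (fun i : {i : Fin n // E i j} => z i.1) := by
        funext i; exact hside i.1 i.2
      have : x j = z j := by
        calc x j = ψ j (φ x) (fun i => x i.1) := (hψ x j).symm
          _ = ψ j (φ z) (fun i => z i.1) := by rw [hφ, hsi]
          _ = z j := hψ z j
      exact hne (congrFun this l)
    have := C.colorable
    simpa using this
  · rintro ⟨C⟩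
    set C' : (∀ i : Fin n, Fin (t i) → Fin 2) → (Fin r → Fin 2) :=
      fun x => finFunctionFinEquiv.symm (C x) with hC'
    refine ⟨C', fun j w a =>
      if h : ∃ x, C' x = w ∧ ∀ i : {i : Fin n // E i j}, x i.1 = a i
      then h.choose j else fun _ => 0, ?_⟩
    intro x j
    dsimp only
    split_ifs with h
    case neg => exact absurd ⟨x, rfl, fun _ => rfl⟩ h
    obtain ⟨hcol, hside⟩ := h.choose_spec
    set z := h.choose
    by_contra hne
    have hl : ∃ l : Fin (t j), z j l ≠ x j l := by
      by_contra hc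
      push_neg at hc
      exact hne (funext hc)
    obtain ⟨l, hl⟩ := hl
    have hadj : (IC.confusionGraph 2 E t).Adj z x :=
      ⟨j, l, hl, fun i hi => hside ⟨i, hi⟩⟩
    exact C.valid hadj (finFunctionFinEquiv.symm.injective hcol)

end Aux

/-- A `(t, r)` index code for `G` exists iff `2^r ≥ χ(Γ_t(G))`;
equivalently, the minimum `r` for which a `(t, r)` index code exists equals
`⌈log₂ χ(Γ_t(G))⌉`. -/
theorem hasCode_iff_two_pow_ge_chromaticNumber
    (n : ℕ) (hn : 1 ≤ n)
    (E : Fin n → Fin n → Prop) (hE : ∀ i, ¬ E i i)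
    (t : ℕ) (ht : 1 ≤ t) :
    (∀ r : ℕ, IC.HasCode E (fun _ => t) r ↔
      (IC.confusionGraph 2 E (fun _ => t)).chromaticNumber ≤ ((2 ^ r : ℕ) : ℕ∞)) ∧
    sInf {r : ℕ | IC.HasCode E (fun _ => t) r} =
      Nat.clog 2 ((IC.confusionGraph 2 E (fun _ => t)).chromaticNumber.toNat) := by
  set G := IC.confusionGraph 2 E (fun _ => t) with hG
  have key : ∀ r : ℕ, IC.HasCode E (fun _ => t) r ↔ G.chromaticNumber ≤ ((2 ^ r : ℕ) : ℕ∞) := by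
    intro r
    rw [IC.hasCode_iff_colorable, SimpleGraph.chromaticNumber_le_iff_colorable]
  refine ⟨key, ?_⟩
  have hfin : G.Colorable (Fintype.card (∀ i : Fin n, Fin t → Fin 2)) :=
    G.colorable_of_fintype
  have hne : G.chromaticNumber ≠ ⊤ :=
    SimpleGraph.chromaticNumber_ne_top_iff_exists.2 ⟨_, hfin⟩
  have hpos : 0 < G.chromaticNumber := SimpleGraph.chromaticNumber_pos hfin
  set k := G.chromaticNumber.toNat with hk
  have hcast : G.chromaticNumber = (k : ℕ∞) := (ENat.coe_toNat hne).symm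
  have key2 : ∀ r : ℕ, IC.HasCode E (fun _ => t) r ↔ Nat.clog 2 k ≤ r := by
    intro r
    rw [key r, hcast, Nat.cast_le, ← Nat.clog_le_iff_le_pow one_lt_two]
  have : {r : ℕ | IC.HasCode E (fun _ => t) r} = {r : ℕ | Nat.clog 2 k ≤ r} := by
    ext r; exact key2 r
  rw [this]
  exact csInf_Ici (α := ℕ) |>.symm ▸ rfl
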